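/- Let r ≥ 1 and φ : ℤ/rℤ → Σ_p(D), and let M_{D,p}(φ) be the set of minimal elements U of E_{D,p}(r) whose support is φ (i.e. φ_U = φ). Then M_{D,p}(φ) is empty if and only if at least one of the sets V(φ(−i−1), φ(−i)), 0 ≤ i ≤ r−1, is empty. -/

import Mathlib

open scoped BigOperators
open scoped Classical

/-- `sp p u` is the sum of the base-`p` digits of `u`. -/
def sp (p u : ℕ) : ℕ := (Nat.digits p u).sum

variable {ι : Type} [Fintype ι]

/-- The coordinatewise sum `Σ_{d ∈ D} u_d · d`. -/
def sigmaSum (D : Finset (ι → ℕ)) (U : D → ℕ) (k : ι) : ℕ :=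
  ∑ d, U d * (d : ι → ℕ) k

/-- Membership in the set `E_{D,p}(r)`. -/
def memE (p : ℕ) (D : Finset (ι → ℕ)) (r : ℕ) (U : D → ℕ) : Prop :=
  (∀ d, U d ≤ p ^ r - 1) ∧
  (∀ k, (p ^ r - 1) ∣ sigmaSum D U k ∧ 0 < sigmaSum D U k)

/-- The `p`-weight `s_p(U)` of a tuple `U`. -/
def spU (p : ℕ) (D : Finset (ι → ℕ)) (U : D → ℕ) : ℕ := ∑ d, sp p (U d)

/-- `s_{D,p}(r)`, the minimal `p`-weight of an element of `E_{D,p}(r)`. -/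
noncomputable def sDp (p : ℕ) (D : Finset (ι → ℕ)) (r : ℕ) : ℕ :=
  sInf { s | ∃ U : D → ℕ, memE p D r U ∧ spU p D U = s }

/-- The `p`-density `δ_p(D)` of the set `D`. -/
noncomputable def density (p : ℕ) (D : Finset (ι → ℕ)) : ℝ :=
  (1 / ((p : ℝ) - 1)) * sInf { x : ℝ | ∃ r : ℕ, 1 ≤ r ∧ x = (sDp p D r : ℝ) / (r : ℝ) }

/-- A minimal solution in `E_{D,p}(r)`. -/
def minimalSol (p : ℕ) (D : Finset (ι → ℕ)) (r : ℕ) (U : D → ℕ) : Prop :=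
  memE p D r U ∧ (spU p D U : ℝ) = ((p : ℝ) - 1) * (r : ℝ) * density p D

/-- `φ_r(U) = (1/(p^r − 1)) Σ_{d ∈ D} u_d · d`. -/
def phiMap (p : ℕ) (D : Finset (ι → ℕ)) (r : ℕ) (U : D → ℕ) (k : ι) : ℕ :=
  sigmaSum D U k / (p ^ r - 1)

/-- The shift `δ_r` on `{0, …, p^r − 1}`. -/
def shiftFun (p r u : ℕ) : ℕ := if u = p ^ r - 1 then u else (p * u) % (p ^ r - 1)

/-- The componentwise action of the shift `δ_r` on tuples. -/
def shiftE (p : ℕ) (D : Finset (ι → ℕ)) (r : ℕ) (U : D → ℕ) : D → ℕ :=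
  fun d => shiftFun p r (U d)

/-- The support `φ_U : ℤ/rℤ → ℕ^n` of a solution `U ∈ E_{D,p}(r)`. -/
def suppMap (p : ℕ) (D : Finset (ι → ℕ)) (r : ℕ) (U : D → ℕ) (k : ZMod r) : ι → ℕ :=
  phiMap p D r ((shiftE p D r)^[k.val] U)

/-- Membership in `MI_{D,p}(r)`: minimal irreducible solutions. -/
def memMI (p : ℕ) (D : Finset (ι → ℕ)) (r : ℕ) (U : D → ℕ) : Prop :=
  minimalSol p D r U ∧ Function.Injective (suppMap p D r U)

/-- The `p`-minimal support `Σ_p(D)`. -/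
def minSupport (p : ℕ) (D : Finset (ι → ℕ)) : Set (ι → ℕ) :=
  { e | ∃ r : ℕ, 1 ≤ r ∧ ∃ U : D → ℕ, memMI p D r U ∧ e ∈ Set.range (suppMap p D r U) }

/-- `ψ(U)`: the tuple of last base-`p` digits of `U`. -/
def psiMap (p : ℕ) (D : Finset (ι → ℕ)) (U : D → ℕ) : D → ℕ := fun d => U d % p

/-- The set `V(e, e')` of digit tuples of minimal irreducible solutions with
`φ_U(−1) = e` and `φ_U(0) = e'`. -/
def Vset (p : ℕ) (D : Finset (ι → ℕ)) (e e' : ι → ℕ) : Set (D → ℕ) :=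
  { v | ∃ r : ℕ, 1 ≤ r ∧ ∃ U : D → ℕ, memMI p D r U ∧
      suppMap p D r U (-1) = e ∧ suppMap p D r U 0 = e' ∧ psiMap p D U = v }

/-- The weight `w(V) = Σ_{d ∈ D} v_d`. -/
def weightV (D : Finset (ι → ℕ)) (v : D → ℕ) : ℕ := ∑ d, v d


set_option linter.unusedSectionVars false
set_option maxHeartbeats 1000000

section Num
variable {p : ℕ} (hp2 : 2 ≤ p)
include hp2

lemma sp_eq (u : ℕ) : sp p u = u % p + sp p (u / p) := by
  rcases Nat.eq_zero_or_pos u with h | h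
  · simp [h, sp]
  · rw [sp, Nat.digits_def' hp2 h]; rfl

lemma sp_of_lt {c : ℕ} (hc : c < p) : sp p c = c := by
  rw [sp_eq hp2, Nat.mod_eq_of_lt hc, Nat.div_eq_of_lt hc]; simp [sp]

lemma sp_add_mul {c : ℕ} (hc : c < p) (t : ℕ) : sp p (c + p * t) = c + sp p t := by
  have h0 : 0 < p := by omega
  rw [sp_eq hp2 (c + p * t), Nat.add_mul_mod_self_left, Nat.mod_eq_of_lt hc,
    Nat.add_mul_div_left _ _ h0, Nat.div_eq_of_lt hc, Nat.zero_add]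

lemma sp_split : ∀ (k : ℕ) {s : ℕ}, s < p ^ k → ∀ c, sp p (s + p ^ k * c) = sp p s + sp p c
  | 0, s, hs, c => by simp at hs; simp [hs, sp]
  | (k+1), s, hs, c => by
      have h0 : 0 < p := by omega
      have hsp : s / p < p ^ k := by
        rw [Nat.div_lt_iff_lt_mul h0]
        calc s < p ^ (k+1) := hs
          _ = p ^ k * p := by ring
      have h1 : s % p + p * (s / p) = s := Nat.mod_add_div s p
      have hrw : s + p ^ (k+1) * c = s % p + p * (s / p + p ^ k * c) := by
        have : p ^ (k+1) * c = p * (p ^ k * c) := by ring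
        rw [Nat.mul_add, this]; omega
      rw [hrw, sp_add_mul hp2 (Nat.mod_lt _ h0) _, sp_split k hsp c, sp_eq hp2 s]
      ring

lemma digits_sum_eq : ∀ (r : ℕ) {u : ℕ}, u < p ^ r → sp p u = ∑ j ∈ Finset.range r, u / p ^ j % p
  | 0, u, hu => by simp at hu; simp [hu, sp]
  | (r+1), u, hu => by
      have h0 : 0 < p := by omega
      have hup : u / p < p ^ r := by
        rw [Nat.div_lt_iff_lt_mul h0]
        calc u < p ^ (r+1) := hu
          _ = p ^ r * p := by ring
      rw [Finset.sum_range_succ', sp_eq hp2 u, digits_sum_eq r hup]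
      simp only [pow_zero, Nat.div_one]
      rw [Nat.add_comm]
      congr 1
      apply Finset.sum_congr rfl
      intro j _
      rw [Nat.div_div_eq_div_mul, ← pow_succ']

lemma digits_rebuild : ∀ (r : ℕ) {u : ℕ}, u < p ^ r → ∑ j ∈ Finset.range r, u / p ^ j % p * p ^ j = u
  | 0, u, hu => by simp at hu; simp [hu]
  | (r+1), u, hu => by
      have h0 : 0 < p := by omega
      have hup : u / p < p ^ r := by
        rw [Nat.div_lt_iff_lt_mul h0]
        calc u < p ^ (r+1) := hu
          _ = p ^ r * p := by ring
      rw [Finset.sum_range_succ']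
      have : ∀ j ∈ Finset.range r, u / p ^ (j+1) % p * p ^ (j+1) = p * ((u / p) / p ^ j % p * p ^ j) := by
        intro j _
        rw [Nat.div_div_eq_div_mul, ← pow_succ']
        ring
      rw [Finset.sum_congr rfl this, ← Finset.mul_sum, digits_rebuild r hup]
      simp only [pow_zero, Nat.div_one, Nat.mul_one]
      have := Nat.mod_add_div u p
      omega

lemma build_lt {r : ℕ} {b : ℕ → ℕ} (hb : ∀ j < r, b j < p) : ∑ j ∈ Finset.range r, b j * p ^ j < p ^ r := by
  induction r with
  | zero => simp
  | succ r ih =>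
      have h1 : ∑ j ∈ Finset.range r, b j * p ^ j < p ^ r := ih (fun j hj => hb j (by omega))
      have h2 : b r ≤ p - 1 := by have := hb r (by omega); omega
      have h3 : b r * p ^ r ≤ (p - 1) * p ^ r := Nat.mul_le_mul_right _ h2
      rw [Finset.sum_range_succ]
      have hpr : 0 < p ^ r := Nat.pow_pos (by omega)
      have : (p - 1) * p ^ r + p ^ r = p ^ (r+1) := by
        have : (p - 1) * p ^ r + p ^ r = p * p ^ r := by
          cases p with
          | zero => omega
          | succ q => simp [Nat.succ_sub_one]; ring
        rw [this, ← pow_succ']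
      omega

lemma build_digit : ∀ (r : ℕ) (b : ℕ → ℕ), (∀ j < r, b j < p) → ∀ i < r,
    (∑ j ∈ Finset.range r, b j * p ^ j) / p ^ i % p = b i
  | 0, b, hb, i, hi => by omega
  | (r+1), b, hb, i, hi => by
      have h0 : 0 < p := by omega
      have hs : ∑ j ∈ Finset.range (r+1), b j * p ^ j
          = b 0 + p * ∑ j ∈ Finset.range r, b (j+1) * p ^ j := by
        rw [Finset.sum_range_succ']
        simp only [pow_zero, Nat.mul_one]
        rw [Finset.mul_sum, Nat.add_comm]
        congr 1
        apply Finset.sum_congr rfl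
        intro j _
        rw [pow_succ']; ring
      cases i with
      | zero =>
          simp only [pow_zero, Nat.div_one, hs]
          rw [Nat.add_mul_mod_self_left, Nat.mod_eq_of_lt (hb 0 (by omega))]
      | succ i =>
          have hdiv : (∑ j ∈ Finset.range (r+1), b j * p ^ j) / p ^ (i+1)
              = (∑ j ∈ Finset.range r, b (j+1) * p ^ j) / p ^ i := by
            rw [hs, pow_succ', ← Nat.div_div_eq_div_mul,
              Nat.add_mul_div_left _ _ h0, Nat.div_eq_of_lt (hb 0 (by omega)), Nat.zero_add]
          rw [hdiv]
          exact build_digit r (fun j => b (j+1)) (fun j hj => hb (j+1) (by omega)) i (by omega)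

lemma build_sp : ∀ (r : ℕ) (b : ℕ → ℕ), (∀ j < r, b j < p) →
    sp p (∑ j ∈ Finset.range r, b j * p ^ j) = ∑ j ∈ Finset.range r, b j
  | 0, b, hb => by simp [sp]
  | (r+1), b, hb => by
      have hs : ∑ j ∈ Finset.range (r+1), b j * p ^ j
          = b 0 + p * ∑ j ∈ Finset.range r, b (j+1) * p ^ j := by
        rw [Finset.sum_range_succ']
        simp only [pow_zero, Nat.mul_one]
        rw [Finset.mul_sum, Nat.add_comm]
        congr 1
        apply Finset.sum_congr rfl
        intro j _
        rw [pow_succ']; ring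
      rw [hs, sp_add_mul hp2 (hb 0 (by omega)),
        build_sp r (fun j => b (j+1)) (fun j hj => hb (j+1) (by omega)),
        Finset.sum_range_succ']
      omega

end Num


section Shift
variable {p r : ℕ} (hp2 : 2 ≤ p) (hr : 1 ≤ r)
include hp2 hr

lemma pow_pred_mul : p ^ (r-1) * p = p ^ r := by
  rw [← pow_succ]; congr 1; omega

lemma two_le_pow : 2 ≤ p ^ r := by
  calc 2 ≤ p := hp2
    _ = p ^ 1 := (pow_one p).symm
    _ ≤ p ^ r := Nat.pow_le_pow_right (by omega) hr

lemma shiftFun_formula {u : ℕ} (hu : u ≤ p ^ r - 1) :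
    shiftFun p r u = u / p ^ (r-1) + u % p ^ (r-1) * p := by
  have h0 : 0 < p := by omega
  have hpr : 0 < p ^ (r-1) := Nat.pow_pos h0
  have hpow := pow_pred_mul hp2 hr
  have h2r := two_le_pow hp2 hr
  have hep : p ^ (r-1) * (p - 1) + p ^ (r-1) = p ^ r := by
    calc p ^ (r-1) * (p - 1) + p ^ (r-1) = p ^ (r-1) * ((p-1) + 1) := by ring
      _ = p ^ r := by rw [Nat.sub_add_cancel (by omega), hpow]
  by_cases hum : u = p ^ r - 1
  · rw [shiftFun, if_pos hum]
    have hurep : u = (p ^ (r-1) - 1) + p ^ (r-1) * (p - 1) := by omega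
    have hdiv : u / p ^ (r-1) = p - 1 := by
      rw [hurep, Nat.add_mul_div_left _ _ hpr, Nat.div_eq_of_lt (by omega)]
      <;> omega
    have hmod : u % p ^ (r-1) = p ^ (r-1) - 1 := by
      rw [hurep, Nat.add_mul_mod_self_left, Nat.mod_eq_of_lt (by omega)]
    have hq : (p ^ (r-1) - 1) * p + p = p ^ r := by
      calc (p ^ (r-1) - 1) * p + p = ((p ^ (r-1) - 1) + 1) * p := by ring
        _ = p ^ r := by rw [Nat.sub_add_cancel (by omega), hpow]
    rw [hdiv, hmod]
    omega
  · rw [shiftFun, if_neg hum]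
    set c := u / p ^ (r-1) with hc
    set s := u % p ^ (r-1) with hs
    have hu' : s + p ^ (r-1) * c = u := Nat.mod_add_div u (p ^ (r-1))
    have hslt : s < p ^ (r-1) := Nat.mod_lt _ hpr
    have hclt : c < p := by
      rw [hc, Nat.div_lt_iff_lt_mul hpr]
      have e : p ^ (r-1) = 1 * p ^ (r-1) := by omega
      have e2 : p * p ^ (r-1) = p ^ r := by rw [Nat.mul_comm, hpow]
      omega
    have key : p * u = (c + p * s) + (p ^ r - 1) * c := by
      have e1 : (p ^ r - 1) * c + c = p ^ r * c := by
        calc (p ^ r - 1) * c + c = ((p ^ r - 1) + 1) * c := by ring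
          _ = p ^ r * c := by rw [Nat.sub_add_cancel (by omega)]
      calc p * u = p * s + p * (p ^ (r-1) * c) := by rw [← hu']; ring
        _ = p * s + p ^ r * c := by rw [← Nat.mul_assoc, Nat.mul_comm p (p ^ (r-1)), hpow]
        _ = (c + p * s) + (p ^ r - 1) * c := by omega
    have hb : c + p * s < p ^ r := by
      have h1 : p * (s + 1) = p * s + p := by ring
      have h2 : p * (s + 1) ≤ p * p ^ (r-1) := Nat.mul_le_mul_left p (by omega)
      have h3 : p * p ^ (r-1) = p ^ r := by rw [Nat.mul_comm, hpow]
      omega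
    have hblt : c + p * s < p ^ r - 1 := by
      rcases Nat.lt_or_ge (c + p * s) (p ^ r - 1) with h | h
      · exact h
      · exfalso
        have heq : c + p * s = p ^ r - 1 := by omega
        have e4 : p * (p ^ (r-1) - 1) + p = p ^ r := by
          have h5 : p * (p ^ (r-1) - 1) + p * 1 = p * ((p ^ (r-1) - 1) + 1) := by ring
          rw [Nat.mul_one] at h5
          rw [h5, Nat.sub_add_cancel (by omega), Nat.mul_comm, hpow]
        have hsge : p ^ (r-1) - 1 ≤ s := by
          have h5 : p * (p ^ (r-1) - 1) ≤ p * s := by omega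
          exact Nat.le_of_mul_le_mul_left h5 h0
        have hseq : s = p ^ (r-1) - 1 := by omega
        have hps : p * s = p ^ r - p := by rw [hseq]; omega
        have hceq : c = p - 1 := by omega
        have : u = p ^ r - 1 := by rw [← hu', hseq, hceq]; omega
        exact hum this
    rw [key, Nat.add_mul_mod_self_left, Nat.mod_eq_of_lt hblt, Nat.mul_comm p s]

lemma shiftFun_le {u : ℕ} (hu : u ≤ p ^ r - 1) : shiftFun p r u ≤ p ^ r - 1 := by
  have h2r := two_le_pow hp2 hr
  rw [shiftFun]
  split
  · exact hu
  · have := Nat.mod_lt (p * u) (show 0 < p ^ r - 1 by omega); omega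

lemma shiftFun_iter : ∀ a ≤ r, ∀ {u : ℕ}, u ≤ p ^ r - 1 →
    (shiftFun p r)^[a] u = u / p ^ (r-a) + u % p ^ (r-a) * p ^ a := by
  intro a
  induction a with
  | zero =>
      intro _ u hu
      have h2r := two_le_pow hp2 hr
      simp only [Function.iterate_zero, id_eq, Nat.sub_zero, pow_zero, Nat.mul_one]
      rw [Nat.div_eq_of_lt (by omega), Nat.mod_eq_of_lt (by omega)]
      omega
  | succ a ih =>
      intro ha u hu
      have h0 : 0 < p := by omega
      have h2r := two_le_pow hp2 hr
      have hpra : 0 < p ^ (r-a) := Nat.pow_pos h0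
      have hpra1 : 0 < p ^ (r-a-1) := Nat.pow_pos h0
      set q := u / p ^ (r-a) with hq
      set s := u % p ^ (r-a) with hs
      have hqs : s + p ^ (r-a) * q = u := Nat.mod_add_div u _
      have hslt : s < p ^ (r-a) := Nat.mod_lt _ hpra
      have hqlt : q < p ^ a := by
        rw [hq, Nat.div_lt_iff_lt_mul hpra]
        have e1 : p ^ a * p ^ (r-a) = p ^ r := by rw [← pow_add]; congr 1; omega
        have e2 : p ^ (r-a) * p ^ a = p ^ r := by rw [← pow_add]; congr 1; omega
        omega
      set c := s / p ^ (r-a-1) with hcdef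
      set s' := s % p ^ (r-a-1) with hs'def
      have hcs : s' + p ^ (r-a-1) * c = s := Nat.mod_add_div s _
      have hs'lt : s' < p ^ (r-a-1) := Nat.mod_lt _ hpra1
      have hppow : p ^ (r-a-1) * p ^ a = p ^ (r-1) := by
        rw [← pow_add]; congr 1; omega
      have hppow2 : p ^ (r-a-1) * p = p ^ (r-a) := by
        rw [← pow_succ]; congr 1; omega
      have hx : (shiftFun p r)^[a] u = (q + s' * p ^ a) + p ^ (r-1) * c := by
        rw [ih (by omega) hu, ← hq, ← hs, ← hcs, ← hppow]
        ring
      have hqs'lt : q + s' * p ^ a < p ^ (r-1) := by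
        have h1 : q + s' * p ^ a < (s' + 1) * p ^ a := by
          have : (s' + 1) * p ^ a = s' * p ^ a + p ^ a := by ring
          omega
        have h2 : (s' + 1) * p ^ a ≤ p ^ (r-a-1) * p ^ a := Nat.mul_le_mul_right _ (by omega)
        rw [hppow] at h2
        omega
      have hxle : (shiftFun p r)^[a] u ≤ p ^ r - 1 := by
        have hclt : c < p := by
          rw [hcdef, Nat.div_lt_iff_lt_mul hpra1, Nat.mul_comm, hppow2]; omega
        have h3 : p ^ (r-1) * c ≤ p ^ (r-1) * (p - 1) := Nat.mul_le_mul_left _ (by omega)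
        have h4 : p ^ (r-1) * (p - 1) + p ^ (r-1) = p ^ r := by
          calc p ^ (r-1) * (p - 1) + p ^ (r-1) = p ^ (r-1) * ((p-1) + 1) := by ring
            _ = p ^ r := by rw [Nat.sub_add_cancel (by omega), pow_pred_mul hp2 hr]
        omega
      rw [Function.iterate_succ_apply', shiftFun_formula hp2 hr hxle, hx]
      have hdiv : ((q + s' * p ^ a) + p ^ (r-1) * c) / p ^ (r-1) = c := by
        rw [Nat.add_mul_div_left _ _ (Nat.pow_pos h0), Nat.div_eq_of_lt hqs'lt]
        omega
      have hmod : ((q + s' * p ^ a) + p ^ (r-1) * c) % p ^ (r-1) = q + s' * p ^ a := by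
        rw [Nat.add_mul_mod_self_left, Nat.mod_eq_of_lt hqs'lt]
      rw [hdiv, hmod]
      -- RHS target: u / p^(r-(a+1)) + u % p^(r-(a+1)) * p^(a+1)
      have hu2 : u = (q * p + c) * p ^ (r-a-1) + s' := by
        rw [← hqs, ← hcs]
        have : p ^ (r-a) = p ^ (r-a-1) * p := hppow2.symm
        rw [this]; ring
      have hra1 : r - (a+1) = r - a - 1 := by omega
      have hudiv : u / p ^ (r-(a+1)) = q * p + c := by
        rw [hra1, hu2, Nat.add_comm, Nat.add_mul_div_right _ _ hpra1,
          Nat.div_eq_of_lt hs'lt]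
        omega
      have humod : u % p ^ (r-(a+1)) = s' := by
        rw [hra1, hu2, Nat.add_comm, Nat.add_mul_mod_self_right, Nat.mod_eq_of_lt hs'lt]
      rw [hudiv, humod, pow_succ]
      ring

lemma shiftFun_iter_r {u : ℕ} (hu : u ≤ p ^ r - 1) : (shiftFun p r)^[r] u = u := by
  have h2r := two_le_pow hp2 hr
  rw [shiftFun_iter hp2 hr r le_rfl hu, Nat.sub_self, pow_zero, Nat.div_one, Nat.mod_one]
  omega

lemma shiftFun_iter_mod {u : ℕ} (hu : u ≤ p ^ r - 1) (a : ℕ) :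
    (shiftFun p r)^[a] u = (shiftFun p r)^[a % r] u := by
  conv_lhs => rw [show a = a % r + r * (a / r) from by rw [Nat.mod_add_div]]
  rw [Function.iterate_add_apply, Function.iterate_mul,
    Function.iterate_fixed (shiftFun_iter_r hp2 hr hu)]

lemma shiftFun_eq_zero {u : ℕ} (hu : u ≤ p ^ r - 1) (h : shiftFun p r u = 0) : u = 0 := by
  have h0 : 0 < p := by omega
  have hpr : 0 < p ^ (r-1) := Nat.pow_pos h0
  rw [shiftFun_formula hp2 hr hu] at h
  obtain ⟨h1, h2'⟩ := Nat.add_eq_zero.mp h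
  have h2 : u % p ^ (r-1) = 0 := by
    rcases Nat.mul_eq_zero.mp h2' with h' | h'
    · exact h'
    · omega
  have := Nat.mod_add_div u (p ^ (r-1))
  rw [h1, h2] at this
  simpa using this.symm

lemma sp_shiftFun {u : ℕ} (hu : u ≤ p ^ r - 1) : sp p (shiftFun p r u) = sp p u := by
  have h0 : 0 < p := by omega
  have hpr : 0 < p ^ (r-1) := Nat.pow_pos h0
  have hpow := pow_pred_mul hp2 hr
  have h2r := two_le_pow hp2 hr
  have hclt : u / p ^ (r-1) < p := by
    rw [Nat.div_lt_iff_lt_mul hpr]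
    have e2 : p * p ^ (r-1) = p ^ r := by rw [Nat.mul_comm, hpow]
    omega
  have hslt : u % p ^ (r-1) < p ^ (r-1) := Nat.mod_lt _ hpr
  have h1 : sp p (shiftFun p r u) = u / p ^ (r-1) + sp p (u % p ^ (r-1)) := by
    rw [shiftFun_formula hp2 hr hu,
      show u / p ^ (r-1) + u % p ^ (r-1) * p = u / p ^ (r-1) + p * (u % p ^ (r-1)) by ring,
      sp_add_mul hp2 hclt]
  have h2 : sp p u = sp p (u % p ^ (r-1)) + u / p ^ (r-1) := by
    conv_lhs => rw [show u = u % p ^ (r-1) + p ^ (r-1) * (u / p ^ (r-1)) from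
      (Nat.mod_add_div u _).symm]
    rw [sp_split hp2 _ hslt, sp_of_lt hp2 hclt]
  omega

lemma shiftFun_mod_p {u : ℕ} (hu : u ≤ p ^ r - 1) {a : ℕ} (ha1 : 1 ≤ a) (har : a ≤ r) :
    ((shiftFun p r)^[a] u) % p = u / p ^ (r-a) % p := by
  rw [shiftFun_iter hp2 hr a har hu]
  have : u % p ^ (r-a) * p ^ a = (u % p ^ (r-a) * p ^ (a-1)) * p := by
    rw [Nat.mul_assoc, ← pow_succ]; congr 2; omega
  rw [this, Nat.add_mul_mod_self_right]

end Shift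



section Walks

variable {p : ℕ} {D : Finset (ι → ℕ)}

/-- A valid digit slice between support values `ehi` and `elo`. -/
def sliceOK (p : ℕ) (D : Finset (ι → ℕ)) (v : D → ℕ) (ehi elo : ι → ℕ) : Prop :=
  (∀ d, v d < p) ∧ ∀ k, (∑ d, v d * (d : ι → ℕ) k) + elo k = p * ehi k

/-- Building a tuple out of digit slices. -/
def buildU (p r : ℕ) (D : Finset (ι → ℕ)) (v : ℕ → D → ℕ) : D → ℕ :=
  fun d => ∑ j ∈ Finset.range r, v j d * p ^ j

/-- A finite walk of digit slices. -/
def FWalk (p : ℕ) (D : Finset (ι → ℕ)) (L : ℕ) (e : ℕ → ι → ℕ) (v : ℕ → D → ℕ) : Prop :=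
  ∀ j < L, sliceOK p D (v j) (e (j+1)) (e j)

/-- A periodic closed walk of digit slices. -/
def PWalk (p : ℕ) (D : Finset (ι → ℕ)) (r : ℕ) (e : ℕ → ι → ℕ) (v : ℕ → D → ℕ) : Prop :=
  (∀ j, sliceOK p D (v j) (e (j+1)) (e j)) ∧ (∀ j, e (j + r) = e j) ∧
  (∀ j, v (j + r) = v j) ∧ (∀ k, 0 < e 0 k)

lemma periodic_mod {α : Type*} {f : ℕ → α} {r : ℕ} (hr : 1 ≤ r)
    (hf : ∀ j, f (j + r) = f j) : ∀ j, f j = f (j % r) := by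
  intro j
  induction j using Nat.strong_induction_on with
  | _ j ih =>
    by_cases h : j < r
    · rw [Nat.mod_eq_of_lt h]
    · have h1 : j - r + r = j := by omega
      have h2 : f j = f (j - r) := by conv_lhs => rw [← h1, hf]
      have h3 : j - r < j := by omega
      have h4 : r ≤ j := by omega
      rw [h2, ih (j - r) h3, ← Nat.mod_eq_sub_mod h4]

lemma telescope {e : ℕ → ι → ℕ} {v : ℕ → D → ℕ} :
    ∀ L : ℕ, FWalk p D L e v → ∀ k,
      (∑ j ∈ Finset.range L, p ^ j * (∑ d, v j d * (d : ι → ℕ) k)) + e 0 k = p ^ L * e L k := by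
  intro L
  induction L with
  | zero => intro _ k; simp
  | succ L ihL =>
      intro hF k
      have ih := ihL (fun j hj => hF j (by omega)) k
      have hs := (hF L (by omega)).2 k
      rw [Finset.sum_range_succ]
      calc (∑ j ∈ Finset.range L, p ^ j * (∑ d, v j d * (d : ι → ℕ) k))
            + p ^ L * (∑ d, v L d * (d : ι → ℕ) k) + e 0 k
          = p ^ L * e L k + p ^ L * (∑ d, v L d * (d : ι → ℕ) k) := by omega
        _ = p ^ L * ((∑ d, v L d * (d : ι → ℕ) k) + e L k) := by ring
        _ = p ^ L * (p * e (L+1) k) := by rw [hs]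
        _ = p ^ (L+1) * e (L+1) k := by ring

variable (hp2 : 2 ≤ p)
include hp2

lemma build_sigma {L : ℕ} (hL : 1 ≤ L) {e : ℕ → ι → ℕ} {v : ℕ → D → ℕ}
    (hF : FWalk p D L e v) (hcl : e L = e 0) (k : ι) :
    sigmaSum D (buildU p L D v) k = (p ^ L - 1) * e 0 k := by
  have h2L := two_le_pow hp2 hL
  have h1 : sigmaSum D (buildU p L D v) k
      = ∑ j ∈ Finset.range L, p ^ j * (∑ d, v j d * (d : ι → ℕ) k) := by
    rw [sigmaSum]
    rw [show ∀ (f : D → ℕ), (∑ d, f d) = ∑ d, f d from fun _ => rfl]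
    calc (∑ d, buildU p L D v d * (d : ι → ℕ) k)
        = ∑ d, ∑ j ∈ Finset.range L, v j d * p ^ j * (d : ι → ℕ) k := by
          apply Finset.sum_congr rfl
          intro d _
          rw [buildU, Finset.sum_mul]
      _ = ∑ j ∈ Finset.range L, ∑ d, v j d * p ^ j * (d : ι → ℕ) k := Finset.sum_comm
      _ = ∑ j ∈ Finset.range L, p ^ j * (∑ d, v j d * (d : ι → ℕ) k) := by
          apply Finset.sum_congr rfl
          intro j _
          rw [Finset.mul_sum]
          apply Finset.sum_congr rfl
          intro d _
          ring
  have h2 := telescope L hF k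
  rw [hcl] at h2
  have h3 : (p ^ L - 1) * e 0 k + e 0 k = p ^ L * e 0 k := by
    calc (p ^ L - 1) * e 0 k + e 0 k = ((p ^ L - 1) + 1) * e 0 k := by ring
      _ = p ^ L * e 0 k := by rw [Nat.sub_add_cancel (by omega)]
  omega

lemma build_memE {L : ℕ} (hL : 1 ≤ L) {e : ℕ → ι → ℕ} {v : ℕ → D → ℕ}
    (hF : FWalk p D L e v) (hcl : e L = e 0) (hpos : ∀ k, 0 < e 0 k) :
    memE p D L (buildU p L D v) := by
  have h2L := two_le_pow hp2 hL
  constructor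
  · intro d
    have hb2 : (∑ j ∈ Finset.range L, v j d * p ^ j) < p ^ L :=
      build_lt hp2 (fun j hj => (hF j hj).1 d)
    have hb : buildU p L D v d = ∑ j ∈ Finset.range L, v j d * p ^ j := rfl
    omega
  · intro k
    rw [build_sigma hp2 hL hF hcl k]
    exact ⟨Dvd.intro _ rfl, Nat.mul_pos (by omega) (hpos k)⟩

lemma build_spU {L : ℕ} (hL : 1 ≤ L) {e : ℕ → ι → ℕ} {v : ℕ → D → ℕ}
    (hF : FWalk p D L e v) :
    spU p D (buildU p L D v) = ∑ j ∈ Finset.range L, ∑ d, v j d := by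
  rw [spU]
  calc (∑ d, sp p (buildU p L D v d)) = ∑ d, ∑ j ∈ Finset.range L, v j d := by
        apply Finset.sum_congr rfl
        intro d _
        exact build_sp hp2 L (fun j => v j d) (fun j hj => (hF j hj).1 d)
    _ = ∑ j ∈ Finset.range L, ∑ d, v j d := Finset.sum_comm

end Walks



section ShiftSol

variable {p r : ℕ} {D : Finset (ι → ℕ)} (hp2 : 2 ≤ p) (hr : 1 ≤ r)
include hp2 hr

lemma shiftFun_key {u : ℕ} (hu : u ≤ p ^ r - 1) :
    p * u = shiftFun p r u + (p ^ r - 1) * (u / p ^ (r-1)) := by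
  have h0 : 0 < p := by omega
  have hpr : 0 < p ^ (r-1) := Nat.pow_pos h0
  have hpow := pow_pred_mul hp2 hr
  have h2r := two_le_pow hp2 hr
  rw [shiftFun_formula hp2 hr hu]
  set c := u / p ^ (r-1) with hc
  set s := u % p ^ (r-1) with hs
  have hu' : s + p ^ (r-1) * c = u := Nat.mod_add_div u (p ^ (r-1))
  have e1 : (p ^ r - 1) * c + c = p ^ r * c := by
    calc (p ^ r - 1) * c + c = ((p ^ r - 1) + 1) * c := by ring
      _ = p ^ r * c := by rw [Nat.sub_add_cancel (by omega)]
  calc p * u = p * s + p * (p ^ (r-1) * c) := by rw [← hu']; ring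
    _ = p * s + p ^ r * c := by rw [← Nat.mul_assoc, Nat.mul_comm p (p ^ (r-1)), hpow]
    _ = (c + s * p) + (p ^ r - 1) * c := by
        have : p * s = s * p := Nat.mul_comm p s
        omega

lemma topdigit_lt {u : ℕ} (hu : u ≤ p ^ r - 1) : u / p ^ (r-1) < p := by
  have h0 : 0 < p := by omega
  have hpr : 0 < p ^ (r-1) := Nat.pow_pos h0
  have hpow := pow_pred_mul hp2 hr
  have h2r := two_le_pow hp2 hr
  rw [Nat.div_lt_iff_lt_mul hpr]
  have e2 : p * p ^ (r-1) = p ^ r := by rw [Nat.mul_comm, hpow]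
  omega

lemma onestep {U : D → ℕ} (hU : memE p D r U) :
    memE p D r (shiftE p D r U) ∧
    sliceOK p D (fun d => U d / p ^ (r-1)) (phiMap p D r U) (phiMap p D r (shiftE p D r U)) := by
  have h0 : 0 < p := by omega
  have h2r := two_le_pow hp2 hr
  have hm : 0 < p ^ r - 1 := by omega
  have hsum : ∀ k, p * sigmaSum D U k
      = sigmaSum D (shiftE p D r U) k + (p ^ r - 1) * (∑ d, (U d / p ^ (r-1)) * (d : ι → ℕ) k) := by
    intro k
    rw [sigmaSum, sigmaSum, Finset.mul_sum, Finset.mul_sum, ← Finset.sum_add_distrib]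
    apply Finset.sum_congr rfl
    intro d _
    have hkey := shiftFun_key hp2 hr (hU.1 d)
    calc p * (U d * (d : ι → ℕ) k) = (p * U d) * (d : ι → ℕ) k := by ring
      _ = (shiftFun p r (U d) + (p ^ r - 1) * (U d / p ^ (r-1))) * (d : ι → ℕ) k := by rw [hkey]
      _ = shiftE p D r U d * (d : ι → ℕ) k + (p ^ r - 1) * (U d / p ^ (r-1) * (d : ι → ℕ) k) := by
          rw [shiftE]; ring
  have hmemE : memE p D r (shiftE p D r U) := by
    constructor
    · intro d
      exact shiftFun_le hp2 hr (hU.1 d)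
    · intro k
      have hd1 := (hU.2 k).1
      have hd2 := (hU.2 k).2
      constructor
      · have heq : sigmaSum D (shiftE p D r U) k
            = p * sigmaSum D U k - (p ^ r - 1) * (∑ d, (U d / p ^ (r-1)) * (d : ι → ℕ) k) := by
          have := hsum k
          omega
        rw [heq]
        exact Nat.dvd_sub (Dvd.dvd.mul_left hd1 p) (Dvd.intro _ rfl)
      · rcases Nat.eq_zero_or_pos (sigmaSum D (shiftE p D r U) k) with h | h
        · exfalso
          have hz : ∀ d ∈ (Finset.univ : Finset D), shiftE p D r U d * (d : ι → ℕ) k = 0 := by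
            rw [← Finset.sum_eq_zero_iff]
            exact h
          have : sigmaSum D U k = 0 := by
            rw [sigmaSum]
            apply Finset.sum_eq_zero
            intro d hd
            rcases Nat.eq_zero_or_pos ((d : ι → ℕ) k) with hk | hk
            · rw [hk, Nat.mul_zero]
            · have h5 := hz d hd
              have h6 : shiftE p D r U d = 0 := by
                rcases Nat.mul_eq_zero.mp h5 with h' | h'
                · exact h'
                · omega
              have h7 : U d = 0 := shiftFun_eq_zero hp2 hr (hU.1 d) h6
              rw [h7, Nat.zero_mul]
          omega
        · exact h
  refine ⟨hmemE, fun d => topdigit_lt hp2 hr (hU.1 d), fun k => ?_⟩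
  have hphi1 : sigmaSum D U k = (p ^ r - 1) * phiMap p D r U k :=
    (Nat.mul_div_cancel' (hU.2 k).1).symm
  have hphi2 : sigmaSum D (shiftE p D r U) k = (p ^ r - 1) * phiMap p D r (shiftE p D r U) k :=
    (Nat.mul_div_cancel' (hmemE.2 k).1).symm
  have hth := hsum k
  rw [hphi1, hphi2] at hth
  show (∑ d, (U d / p ^ (r-1)) * (d : ι → ℕ) k) + phiMap p D r (shiftE p D r U) k
      = p * phiMap p D r U k
  have h9 : (p ^ r - 1) * ((∑ d, (U d / p ^ (r-1)) * (d : ι → ℕ) k)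
        + phiMap p D r (shiftE p D r U) k)
      = (p ^ r - 1) * (p * phiMap p D r U k) := by
    rw [Nat.mul_add]
    rw [show (p ^ r - 1) * (p * phiMap p D r U k) = p * ((p ^ r - 1) * phiMap p D r U k) by ring]
    omega
  exact Nat.eq_of_mul_eq_mul_left hm h9

lemma shiftE_iter_apply (U : D → ℕ) (a : ℕ) (d : D) :
    (shiftE p D r)^[a] U d = (shiftFun p r)^[a] (U d) := by
  induction a generalizing U with
  | zero => rfl
  | succ a ih =>
      rw [Function.iterate_succ_apply, Function.iterate_succ_apply]
      exact ih (shiftE p D r U)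

lemma memE_iter {U : D → ℕ} (hU : memE p D r U) (a : ℕ) : memE p D r ((shiftE p D r)^[a] U) := by
  induction a with
  | zero => exact hU
  | succ a ih => rw [Function.iterate_succ_apply']; exact (onestep hp2 hr ih).1

lemma spU_iter {U : D → ℕ} (hU : memE p D r U) (a : ℕ) :
    spU p D ((shiftE p D r)^[a] U) = spU p D U := by
  induction a with
  | zero => rfl
  | succ a ih =>
      rw [Function.iterate_succ_apply', ← ih]
      apply Finset.sum_congr rfl
      intro d _
      rw [shiftE]
      exact sp_shiftFun hp2 hr ((memE_iter hp2 hr hU a).1 d)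

lemma shiftE_iter_r {U : D → ℕ} (hU : memE p D r U) : (shiftE p D r)^[r] U = U := by
  funext d
  rw [shiftE_iter_apply hp2 hr]
  exact shiftFun_iter_r hp2 hr (hU.1 d)

lemma shiftE_iter_mod {U : D → ℕ} (hU : memE p D r U) (a : ℕ) :
    (shiftE p D r)^[a] U = (shiftE p D r)^[a % r] U := by
  conv_lhs => rw [show a = a % r + r * (a / r) from by rw [Nat.mod_add_div]]
  rw [Function.iterate_add_apply, Function.iterate_mul,
    Function.iterate_fixed (shiftE_iter_r hp2 hr hU)]

lemma suppMap_iter {U : D → ℕ} (hU : memE p D r U) (a : ℕ) (κ : ZMod r) :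
    suppMap p D r ((shiftE p D r)^[a] U) κ = suppMap p D r U (κ + (a : ZMod r)) := by
  haveI : NeZero r := ⟨by omega⟩
  rw [suppMap, suppMap, ← Function.iterate_add_apply]
  congr 1
  rw [shiftE_iter_mod hp2 hr hU (κ.val + a), shiftE_iter_mod hp2 hr hU (κ + (a : ZMod r)).val]
  congr 1
  rw [ZMod.val_add, ZMod.val_natCast, Nat.mod_mod_of_dvd _ dvd_rfl]
  conv_lhs => rw [Nat.add_mod, Nat.mod_eq_of_lt (ZMod.val_lt κ)]

end ShiftSol



section Tier2

variable {p r : ℕ} {D : Finset (ι → ℕ)} (hp2 : 2 ≤ p) (hr : 1 ≤ r)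
include hp2 hr

lemma pwalk_pos {e : ℕ → ι → ℕ} {v : ℕ → D → ℕ} (hW : PWalk p D r e v) :
    ∀ j k, 0 < e j k := by
  intro j
  induction j with
  | zero => exact hW.2.2.2
  | succ j ih =>
      intro k
      have hs := (hW.1 j).2 k
      rcases Nat.eq_zero_or_pos (e (j+1) k) with h | h
      · exfalso; rw [h, Nat.mul_zero] at hs; have := ih k; omega
      · exact h

lemma pwalk_e_congr {e : ℕ → ι → ℕ} {v : ℕ → D → ℕ} (hW : PWalk p D r e v)
    {a b : ℕ} (hab : (a : ZMod r) = (b : ZMod r)) : e a = e b := by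
  have h := (ZMod.natCast_eq_natCast_iff' a b r).mp hab
  rw [periodic_mod hr hW.2.1 a, periodic_mod hr hW.2.1 b, h]

lemma pwalk_fwalk {e : ℕ → ι → ℕ} {v : ℕ → D → ℕ} (hW : PWalk p D r e v) {L : ℕ} :
    FWalk p D L e v := fun j _ => hW.1 j

lemma pwalk_memE {e : ℕ → ι → ℕ} {v : ℕ → D → ℕ} (hW : PWalk p D r e v) :
    memE p D r (buildU p r D v) := by
  have hcl : e r = e 0 := by have := hW.2.1 0; rwa [Nat.zero_add] at this
  exact build_memE hp2 hr (pwalk_fwalk hp2 hr hW) hcl hW.2.2.2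

lemma pwalk_phi_iter {e : ℕ → ι → ℕ} {v : ℕ → D → ℕ} (hW : PWalk p D r e v) :
    ∀ a, a ≤ r → phiMap p D r ((shiftE p D r)^[a] (buildU p r D v)) = e (r - a) := by
  have h2r := two_le_pow hp2 hr
  have hm : 0 < p ^ r - 1 := by omega
  have hcl : e r = e 0 := by have := hW.2.1 0; rwa [Nat.zero_add] at this
  have hBU := pwalk_memE hp2 hr hW
  intro a
  induction a with
  | zero =>
      intro _
      funext k
      rw [Function.iterate_zero, id_eq, phiMap, build_sigma hp2 hr (pwalk_fwalk hp2 hr hW) hcl k,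
        Nat.sub_zero, Nat.mul_div_cancel_left _ hm, ← hcl]
  | succ a ih =>
      intro ha
      have hWa := memE_iter hp2 hr hBU a
      have hstep := (onestep hp2 hr hWa).2
      have hIH := ih (by omega)
      -- identify the top-digit slice with v (r - a - 1)
      have hslice : (fun d => (shiftE p D r)^[a] (buildU p r D v) d / p ^ (r-1))
          = v (r - a - 1) := by
        funext d
        have hud : buildU p r D v d ≤ p ^ r - 1 := hBU.1 d
        have h0 : 0 < p := by omega
        -- x / p^(r-1) = (δ x) % p where x = δ^a u
        have hx : (shiftE p D r)^[a] (buildU p r D v) d ≤ p ^ r - 1 := hWa.1 d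
        have hxd : (shiftE p D r)^[a] (buildU p r D v) d / p ^ (r-1) < p := topdigit_lt hp2 hr hx
        have h1 : (shiftE p D r)^[a+1] (buildU p r D v) d
            = (shiftE p D r)^[a] (buildU p r D v) d / p ^ (r-1)
              + ((shiftE p D r)^[a] (buildU p r D v) d % p ^ (r-1)) * p := by
          rw [Function.iterate_succ_apply', shiftE]
          exact shiftFun_formula hp2 hr hx
        have h2 : (shiftE p D r)^[a+1] (buildU p r D v) d % p
            = (shiftE p D r)^[a] (buildU p r D v) d / p ^ (r-1) := by
          rw [h1, Nat.add_mul_mod_self_right, Nat.mod_eq_of_lt hxd]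
        -- also δ^(a+1) u % p = u / p^(r-(a+1)) % p = digit (r-a-1) = v (r-a-1) d
        have h3 : (shiftE p D r)^[a+1] (buildU p r D v) d % p
            = buildU p r D v d / p ^ (r-(a+1)) % p := by
          rw [shiftE_iter_apply hp2 hr]
          exact shiftFun_mod_p hp2 hr hud (by omega) ha
        have h4 : buildU p r D v d / p ^ (r-(a+1)) % p = v (r-(a+1)) d := by
          have := build_digit hp2 r (fun j => v j d) (fun j hj => (hW.1 j).1 d) (r-(a+1)) (by omega)
          exact this
        rw [← h2, h3]
        exact h4
      funext k
      have hA := hstep.2 k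
      rw [hslice, hIH] at hA
      have hB := (hW.1 (r - a - 1)).2 k
      have hB' : (∑ d, v (r-a-1) d * (d : ι → ℕ) k) + e (r-a-1) k = p * e (r-a) k := by
        have hre : r - a - 1 + 1 = r - a := by omega
        rwa [hre] at hB
      rw [Function.iterate_succ_apply']
      have hre2 : r - (a+1) = r - a - 1 := by omega
      rw [hre2]
      omega

lemma pwalk_suppMap {e : ℕ → ι → ℕ} {v : ℕ → D → ℕ} (hW : PWalk p D r e v) (t : ℕ) :
    suppMap p D r (buildU p r D v) (-(t : ZMod r)) = e t := by
  haveI : NeZero r := ⟨by omega⟩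
  rw [suppMap, pwalk_phi_iter hp2 hr hW (-(t : ZMod r)).val (le_of_lt (ZMod.val_lt _))]
  apply pwalk_e_congr hp2 hr hW
  have h1 : ((r - (-(t : ZMod r)).val : ℕ) : ZMod r)
      = (r : ZMod r) - ((-(t : ZMod r)).val : ZMod r) :=
    Nat.cast_sub (le_of_lt (ZMod.val_lt _))
  have h2 : (((-(t : ZMod r)).val : ℕ) : ZMod r) = -(t : ZMod r) :=
    ZMod.natCast_rightInverse _
  rw [h1, ZMod.natCast_self, h2]
  ring

end Tier2



section Decompose

variable {p r : ℕ} {D : Finset (ι → ℕ)} (hp2 : 2 ≤ p) (hr : 1 ≤ r)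
include hp2 hr

lemma phiMap_pos {U : D → ℕ} (hU : memE p D r U) (k : ι) : 0 < phiMap p D r U k := by
  have h2r := two_le_pow hp2 hr
  have hm : 0 < p ^ r - 1 := by omega
  exact Nat.div_pos (Nat.le_of_dvd (hU.2 k).2 (hU.2 k).1) hm

lemma decompose {U : D → ℕ} (hU : memE p D r U) :
    ∃ (e : ℕ → ι → ℕ) (v : ℕ → D → ℕ), PWalk p D r e v ∧ buildU p r D v = U ∧
      v 0 = psiMap p D U ∧ spU p D U = ∑ j ∈ Finset.range r, ∑ d, v j d := by
  have h0 : 0 < p := by omega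
  have h2r := two_le_pow hp2 hr
  have hm : 0 < p ^ r - 1 := by omega
  have hub : ∀ d : D, U d < p ^ r := fun d => by have := hU.1 d; omega
  refine ⟨fun j => phiMap p D r ((shiftE p D r)^[(r - j % r) % r] U),
          fun j d => U d / p ^ (j % r) % p, ⟨?_, ?_, ?_, ?_⟩, ?_, ?_, ?_⟩
  · -- slices
    intro j
    show sliceOK p D (fun d => U d / p ^ (j % r) % p)
      (phiMap p D r ((shiftE p D r)^[(r - (j+1) % r) % r] U))
      (phiMap p D r ((shiftE p D r)^[(r - j % r) % r] U))
    set j' := j % r with hj'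
    have hj'lt : j' < r := Nat.mod_lt _ (by omega)
    set a := r - j' with ha
    have ha1 : 1 ≤ a := by omega
    have har : a ≤ r := by omega
    set W := (shiftE p D r)^[a-1] U with hWdef
    have hWm : memE p D r W := memE_iter hp2 hr hU (a-1)
    have hstep := (onestep hp2 hr hWm).2
    have hsucc : shiftE p D r W = (shiftE p D r)^[a] U := by
      have ha2 : (shiftE p D r)^[a] U = (shiftE p D r)^[(a-1)+1] U := by
        congr 1
        omega
      rw [hWdef, ha2, Function.iterate_succ_apply']
    have hslice : (fun d => W d / p ^ (r-1)) = (fun d => U d / p ^ j' % p) := by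
      funext d
      have hx : W d ≤ p ^ r - 1 := hWm.1 d
      have hxd : W d / p ^ (r-1) < p := topdigit_lt hp2 hr hx
      have h1 : shiftE p D r W d = W d / p ^ (r-1) + (W d % p ^ (r-1)) * p :=
        shiftFun_formula hp2 hr hx
      have h2 : shiftE p D r W d % p = W d / p ^ (r-1) := by
        rw [h1, Nat.add_mul_mod_self_right, Nat.mod_eq_of_lt hxd]
      have h3 : shiftE p D r W d % p = U d / p ^ (r - a) % p := by
        rw [hsucc, shiftE_iter_apply hp2 hr]
        exact shiftFun_mod_p hp2 hr (hU.1 d) ha1 har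
      have h4 : r - a = j' := by omega
      rw [← h2, h3, h4]
    have h5 : (j + 1) % r = (j' + 1) % r := by
      have hmm : j % r = j' % r := by rw [← hj', Nat.mod_mod_of_dvd _ dvd_rfl]
      rw [Nat.add_mod j 1 r, Nat.add_mod j' 1 r, hmm]
    have hehi : phiMap p D r W = phiMap p D r ((shiftE p D r)^[(r - (j+1) % r) % r] U) := by
      rcases Nat.lt_or_ge j' (r - 1) with hlt | hge
      · have h5' : (j+1) % r = j' + 1 := by rw [h5, Nat.mod_eq_of_lt (by omega)]
        have h6 : (r - (j+1) % r) % r = a - 1 := by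
          rw [h5', Nat.mod_eq_of_lt (by omega)]
          omega
        rw [h6, hWdef]
      · have hj'e : j' = r - 1 := by omega
        have h5' : (j+1) % r = 0 := by
          rw [h5, show j' + 1 = r by omega, Nat.mod_self]
        have h6 : (r - (j+1) % r) % r = 0 := by
          rw [h5', Nat.sub_zero, Nat.mod_self]
        have hae : a - 1 = 0 := by omega
        rw [h6, hWdef, hae]
    have helo : phiMap p D r (shiftE p D r W)
        = phiMap p D r ((shiftE p D r)^[(r - j % r) % r] U) := by
      rw [hsucc, ← hj']
      by_cases hj0 : j' = 0
      · have h6 : (r - j') % r = 0 := by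
          rw [hj0, Nat.sub_zero, Nat.mod_self]
        have hae : a = r := by omega
        rw [h6, hae, shiftE_iter_r hp2 hr hU, Function.iterate_zero, id_eq]
      · have h6 : (r - j') % r = a := by
          rw [Nat.mod_eq_of_lt (by omega)]
        rw [h6]
    rw [← hslice, ← hehi, ← helo]
    exact hstep
  · intro j
    show phiMap p D r ((shiftE p D r)^[(r - (j + r) % r) % r] U)
        = phiMap p D r ((shiftE p D r)^[(r - j % r) % r] U)
    rw [Nat.add_mod_right]
  · intro j
    show (fun d => U d / p ^ ((j + r) % r) % p) = (fun d => U d / p ^ (j % r) % p)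
    rw [Nat.add_mod_right]
  · intro k
    show 0 < phiMap p D r ((shiftE p D r)^[(r - 0 % r) % r] U) k
    have h7 : (r - 0 % r) % r = 0 := by
      rw [Nat.zero_mod, Nat.sub_zero, Nat.mod_self]
    rw [h7, Function.iterate_zero, id_eq]
    exact phiMap_pos hp2 hr hU k
  · funext d
    show (∑ j ∈ Finset.range r, U d / p ^ (j % r) % p * p ^ j) = U d
    have hcong : ∀ j ∈ Finset.range r, U d / p ^ (j % r) % p * p ^ j = U d / p ^ j % p * p ^ j := by
      intro j hj
      rw [Nat.mod_eq_of_lt (Finset.mem_range.mp hj)]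
    rw [Finset.sum_congr rfl hcong]
    exact digits_rebuild hp2 r (hub d)
  · funext d
    show U d / p ^ (0 % r) % p = U d % p
    rw [Nat.zero_mod, pow_zero, Nat.div_one]
  · rw [spU]
    have h8 : ∀ d : D, sp p (U d) = ∑ j ∈ Finset.range r, U d / p ^ j % p := fun d =>
      digits_sum_eq hp2 r (hub d)
    rw [Finset.sum_congr rfl (fun d _ => h8 d)]
    rw [Finset.sum_comm]
    apply Finset.sum_congr rfl
    intro j hj
    apply Finset.sum_congr rfl
    intro d _
    show U d / p ^ j % p = U d / p ^ (j % r) % p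
    rw [Nat.mod_eq_of_lt (Finset.mem_range.mp hj)]

lemma density_lb {U : D → ℕ} (hU : memE p D r U) :
    ((p : ℝ) - 1) * (r : ℝ) * density p D ≤ (spU p D U : ℝ) := by
  have hp1 : (0 : ℝ) < (p : ℝ) - 1 := by
    have : (2 : ℝ) ≤ (p : ℝ) := by exact_mod_cast hp2
    linarith
  have hr0 : (0 : ℝ) < (r : ℝ) := by exact_mod_cast hr
  set X := { x : ℝ | ∃ r' : ℕ, 1 ≤ r' ∧ x = (sDp p D r' : ℝ) / (r' : ℝ) } with hX
  have hbdd : BddBelow X := by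
    refine ⟨0, fun x hx => ?_⟩
    obtain ⟨r', hr', hx'⟩ := hx
    rw [hx']
    positivity
  have hmem : (sDp p D r : ℝ) / (r : ℝ) ∈ X := ⟨r, hr, rfl⟩
  have h1 : sInf X ≤ (sDp p D r : ℝ) / (r : ℝ) := csInf_le hbdd hmem
  have h2 : sDp p D r ≤ spU p D U := Nat.sInf_le ⟨U, hU, rfl⟩
  have h2' : (sDp p D r : ℝ) ≤ (spU p D U : ℝ) := by exact_mod_cast h2
  have h3 : ((p : ℝ) - 1) * (r : ℝ) * density p D = (r : ℝ) * sInf X := by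
    rw [density, ← hX]
    field_simp
  rw [h3]
  calc (r : ℝ) * sInf X ≤ (r : ℝ) * ((sDp p D r : ℝ) / (r : ℝ)) := by
        apply mul_le_mul_of_nonneg_left h1 (le_of_lt hr0)
    _ = (sDp p D r : ℝ) := by field_simp
    _ ≤ (spU p D U : ℝ) := h2'

lemma minimal_of {U : D → ℕ} (hU : memE p D r U)
    (hle : (spU p D U : ℝ) ≤ ((p : ℝ) - 1) * (r : ℝ) * density p D) :
    minimalSol p D r U :=
  ⟨hU, le_antisymm hle (density_lb hp2 hr hU)⟩

end Decompose



section Arcs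

lemma sum_range_add' (f : ℕ → ℕ) (m n : ℕ) :
    ∑ i ∈ Finset.range (m + n), f i
      = ∑ i ∈ Finset.range m, f i + ∑ i ∈ Finset.range n, f (m + i) := by
  induction n with
  | zero => simp
  | succ n ih =>
      rw [show m + (n+1) = (m+n) + 1 by omega, Finset.sum_range_succ, ih,
        Finset.sum_range_succ]
      omega

lemma periodic_sum_shift {g : ℕ → ℕ} {r : ℕ} (hr : 1 ≤ r) (hg : ∀ j, g (j + r) = g j) :
    ∀ t, ∑ i ∈ Finset.range r, g (t + i) = ∑ i ∈ Finset.range r, g i := by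
  intro t
  induction t with
  | zero => simp
  | succ t ih =>
      obtain ⟨r', hr'⟩ : ∃ r', r = r' + 1 := ⟨r - 1, by omega⟩
      subst hr'
      have e1 : ∑ i ∈ Finset.range (r'+1), g (t+1+i)
          = (∑ i ∈ Finset.range r', g (t+1+i)) + g (t+1+r') := Finset.sum_range_succ _ _
      have e2 : ∑ i ∈ Finset.range (r'+1), g (t+i)
          = (∑ i ∈ Finset.range r', g (t+(i+1))) + g (t+0) := Finset.sum_range_succ' _ _
      have e3 : ∑ i ∈ Finset.range r', g (t+1+i) = ∑ i ∈ Finset.range r', g (t+(i+1)) :=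
        Finset.sum_congr rfl (fun i _ => by rw [show t+1+i = t+(i+1) by omega])
      have e4 : g (t+1+r') = g (t+0) := by
        rw [show t+1+r' = t+(r'+1) by omega, show t + (r'+1) = t + (r'+1) from rfl, hg,
          show t+0 = t by omega]
      rw [← ih, e1, e2, e3, e4]

variable {p : ℕ} {D : Finset (ι → ℕ)} (hp2 : 2 ≤ p)
include hp2

lemma arc_pwalk {r : ℕ} (hr : 1 ≤ r) {e : ℕ → ι → ℕ} {v : ℕ → D → ℕ}
    (hW : PWalk p D r e v) {t L : ℕ} (hL : 1 ≤ L) (hwrap : e (t + L) = e t) :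
    PWalk p D L (fun j => e (t + j % L)) (fun j => v (t + j % L)) := by
  refine ⟨?_, ?_, ?_, ?_⟩
  · intro j
    set i := j % L with hi
    have hilt : i < L := Nat.mod_lt _ (by omega)
    have hbase := hW.1 (t + i)
    rcases Nat.lt_or_ge (i + 1) L with hlt | hge
    · have h1 : (j + 1) % L = i + 1 := by
        rw [Nat.add_mod j 1 L, ← hi, Nat.mod_eq_of_lt (show 1 < L by omega),
          Nat.mod_eq_of_lt hlt]
      show sliceOK p D (v (t + j % L)) (e (t + (j+1) % L)) (e (t + j % L))
      rw [h1, ← hi, show t + (i + 1) = t + i + 1 by omega]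
      exact hbase
    · have hie : i + 1 = L := by omega
      have h1 : (j + 1) % L = 0 := by
        rw [Nat.add_mod j 1 L, ← hi]
        rcases Nat.eq_or_lt_of_le hL with h | h
        · simp [← h, Nat.mod_one]
        · rw [Nat.mod_eq_of_lt h, hie, Nat.mod_self]
      show sliceOK p D (v (t + j % L)) (e (t + (j+1) % L)) (e (t + j % L))
      rw [h1, Nat.add_zero, ← hi]
      have h2 : e t = e (t + i + 1) := by
        rw [show t + i + 1 = t + L by omega] at *
        exact hwrap.symm
      rw [h2]
      exact hbase
  · intro j
    have : (j + L) % L = j % L := Nat.add_mod_right j L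
    simp only [this]
  · intro j
    have : (j + L) % L = j % L := Nat.add_mod_right j L
    simp only [this]
  · intro k
    have : (0 : ℕ) % L = 0 := Nat.zero_mod L
    simp only [this, Nat.add_zero]
    exact pwalk_pos hp2 hr hW t k

end Arcs



section MainForward

variable {p : ℕ} {D : Finset (ι → ℕ)} (hp2 : 2 ≤ p)
include hp2

lemma main_forward :
    ∀ r : ℕ, 1 ≤ r → ∀ U : D → ℕ, minimalSol p D r U →
      ∀ κ : ZMod r, (Vset p D (suppMap p D r U (κ - 1)) (suppMap p D r U κ)).Nonempty := by
  intro r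
  induction r using Nat.strong_induction_on with
  | _ r IH =>
  intro hr U hmin κ
  haveI : NeZero r := ⟨by omega⟩
  by_cases hinj : Function.Injective (suppMap p D r U)
  · -- irreducible case: shift by κ.val
    set a := κ.val with hadef
    set W := (shiftE p D r)^[a] U with hWdef
    have hWE : memE p D r W := memE_iter hp2 hr hmin.1 a
    have hWmin : minimalSol p D r W :=
      ⟨hWE, by rw [hWdef, spU_iter hp2 hr hmin.1 a]; exact hmin.2⟩
    have hsupp : ∀ μ : ZMod r, suppMap p D r W μ = suppMap p D r U (μ + (a : ZMod r)) :=
      fun μ => suppMap_iter hp2 hr hmin.1 a μ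
    have hWinj : Function.Injective (suppMap p D r W) := by
      intro z w hzw
      rw [hsupp z, hsupp w] at hzw
      exact add_right_cancel (hinj hzw)
    have hacast : ((a : ℕ) : ZMod r) = κ := ZMod.natCast_rightInverse κ
    refine ⟨psiMap p D W, r, hr, W, ⟨hWmin, hWinj⟩, ?_, ?_, rfl⟩
    · rw [hsupp, hacast, show (-1 : ZMod r) + κ = κ - 1 by ring]
    · rw [hsupp, hacast, zero_add]
  · -- reducible case
    obtain ⟨x, y, hxy, hne⟩ := Function.not_injective_iff.mp hinj
    obtain ⟨e, v, hW, hbuild, hv0, hsp⟩ := decompose hp2 hr hmin.1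
    have hsuppe : ∀ t : ℕ, suppMap p D r U (-(t : ZMod r)) = e t := fun t => by
      rw [← hbuild]
      exact pwalk_suppMap hp2 hr hW t
    have hval : ∀ z : ZMod r, e (-z).val = suppMap p D r U z := fun z => by
      rw [← hsuppe (-z).val]
      congr 1
      have hz : (((-z).val : ℕ) : ZMod r) = -z := ZMod.natCast_rightInverse _
      rw [hz]
      ring
    have hx'lt : (-x).val < r := ZMod.val_lt _
    have hy'lt : (-y).val < r := ZMod.val_lt _
    have hex : e (-x).val = e (-y).val := by rw [hval, hval, hxy]
    have hxyval : (-x).val ≠ (-y).val := by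
      intro h
      exact hne (neg_injective (ZMod.val_injective r h))
    obtain ⟨a', b', hab, hbr, heab⟩ : ∃ a' b', a' < b' ∧ b' < r ∧ e a' = e b' := by
      rcases Nat.lt_or_ge (-x).val (-y).val with h | h
      · exact ⟨_, _, h, hy'lt, hex⟩
      · exact ⟨_, _, by omega, hx'lt, hex.symm⟩
    set r₁ := b' - a' with hr₁def
    set r₂ := r - r₁ with hr₂def
    have hr₁1 : 1 ≤ r₁ := by omega
    have hr₁lt : r₁ < r := by omega
    have hr₂1 : 1 ≤ r₂ := by omega
    have hr₂lt : r₂ < r := by omega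
    have hsum_r : r₁ + r₂ = r := by omega
    have hb'e : b' = a' + r₁ := by omega
    have hwrap₁ : e (a' + r₁) = e a' := by rw [← hb'e]; exact heab.symm
    have hwrap₂ : e (b' + r₂) = e b' := by
      have h1 : b' + r₂ = a' + r := by omega
      rw [h1, hW.2.1 a', heab]
    have hW₁ := arc_pwalk hp2 hr hW hr₁1 hwrap₁
    have hW₂ := arc_pwalk hp2 hr hW hr₂1 hwrap₂
    set U₁ := buildU p r₁ D (fun j => v (a' + j % r₁)) with hU₁
    set U₂ := buildU p r₂ D (fun j => v (b' + j % r₂)) with hU₂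
    have hU₁E : memE p D r₁ U₁ := pwalk_memE hp2 hr₁1 hW₁
    have hU₂E : memE p D r₂ U₂ := pwalk_memE hp2 hr₂1 hW₂
    set g : ℕ → ℕ := fun j => ∑ d, v j d with hgdef
    have hgper : ∀ j, g (j + r) = g j := fun j => by
      simp only [hgdef, hW.2.2.1 j]
    have hsp₁ : spU p D U₁ = ∑ j ∈ Finset.range r₁, g (a' + j) := by
      rw [hU₁, build_spU hp2 hr₁1 (pwalk_fwalk hp2 hr₁1 hW₁)]
      apply Finset.sum_congr rfl
      intro j hj
      rw [Nat.mod_eq_of_lt (Finset.mem_range.mp hj)]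
    have hsp₂ : spU p D U₂ = ∑ j ∈ Finset.range r₂, g (b' + j) := by
      rw [hU₂, build_spU hp2 hr₂1 (pwalk_fwalk hp2 hr₂1 hW₂)]
      apply Finset.sum_congr rfl
      intro j hj
      rw [Nat.mod_eq_of_lt (Finset.mem_range.mp hj)]
    have hsplit : spU p D U₁ + spU p D U₂ = spU p D U := by
      rw [hsp₁, hsp₂, hsp]
      have h1 : ∑ j ∈ Finset.range r₂, g (b' + j)
          = ∑ j ∈ Finset.range r₂, g (a' + (r₁ + j)) :=
        Finset.sum_congr rfl (fun j _ => by rw [show a' + (r₁ + j) = b' + j by omega])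
      have h2 : ∑ j ∈ Finset.range (r₁ + r₂), g (a' + j)
          = ∑ j ∈ Finset.range r₁, g (a' + j) + ∑ j ∈ Finset.range r₂, g (a' + (r₁ + j)) :=
        sum_range_add' (fun i => g (a' + i)) r₁ r₂
      rw [h1, ← h2, hsum_r, periodic_sum_shift hr hgper a']
    have hcast : ((spU p D U₁ : ℝ)) + (spU p D U₂ : ℝ) = (spU p D U : ℝ) := by
      exact_mod_cast congrArg (fun n : ℕ => (n : ℝ)) hsplit
    have lb₁ := density_lb hp2 hr₁1 hU₁E
    have lb₂ := density_lb hp2 hr₂1 hU₂E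
    have hrr : (r : ℝ) = (r₁ : ℝ) + (r₂ : ℝ) := by exact_mod_cast hsum_r.symm
    have hexp : ((p:ℝ)-1) * (r:ℝ) * density p D
        = ((p:ℝ)-1) * (r₁:ℝ) * density p D + ((p:ℝ)-1) * (r₂:ℝ) * density p D := by
      rw [hrr]; ring
    have hm₁ : minimalSol p D r₁ U₁ := by
      apply minimal_of hp2 hr₁1 hU₁E
      have := hmin.2
      linarith
    have hm₂ : minimalSol p D r₂ U₂ := by
      apply minimal_of hp2 hr₂1 hU₂E
      have := hmin.2
      linarith
    -- translate the target pair into e-values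
    set i := (-κ).val with hidef
    have hilt : i < r := by rw [hidef]; exact ZMod.val_lt _
    have hφκ : suppMap p D r U κ = e i := by rw [hidef]; exact (hval κ).symm
    have hφκ1 : suppMap p D r U (κ - 1) = e (i + 1) := by
      rw [hidef, ← hsuppe ((-κ).val + 1)]
      congr 1
      push_cast
      have hz : (((-κ).val : ℕ) : ZMod r) = -κ := ZMod.natCast_rightInverse _
      rw [hz]
      ring
    have hcmod : ∀ s t : ℕ, s % r = t % r → e s = e t := fun s t h => by
      rw [periodic_mod hr hW.2.1 s, periodic_mod hr hW.2.1 t, h]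
    set j := (i + r - a') % r with hjdef
    have hjlt : j < r := Nat.mod_lt _ (by omega)
    have haj : (a' + j) % r = i % r := by
      rw [hjdef, Nat.add_mod a' ((i + r - a') % r) r, Nat.mod_mod_of_dvd _ dvd_rfl,
        ← Nat.add_mod, show a' + (i + r - a') = i + r by omega, Nat.add_mod_right]
    have haj1 : (a' + j + 1) % r = (i + 1) % r := by
      rw [Nat.add_mod (a' + j) 1 r, haj, ← Nat.add_mod]
    rcases Nat.lt_or_ge j r₁ with hcase | hcase
    · haveI : NeZero r₁ := ⟨by omega⟩
      have hV := IH r₁ hr₁lt hr₁1 U₁ hm₁ (-(j : ZMod r₁))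
      have hA : suppMap p D r₁ U₁ (-(j : ZMod r₁)) = e (a' + j % r₁) := by
        rw [hU₁]
        exact pwalk_suppMap hp2 hr₁1 hW₁ j
      have hA' : suppMap p D r₁ U₁ (-(j : ZMod r₁)) = suppMap p D r U κ := by
        rw [hA, Nat.mod_eq_of_lt hcase, hφκ]
        exact hcmod _ _ haj
      have hB : suppMap p D r₁ U₁ (-(j : ZMod r₁) - 1) = e (a' + (j + 1) % r₁) := by
        have h1 : (-(j : ZMod r₁) - 1 : ZMod r₁) = -(((j + 1 : ℕ)) : ZMod r₁) := by
          push_cast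
          ring
        rw [h1, hU₁]
        exact pwalk_suppMap hp2 hr₁1 hW₁ (j + 1)
      have hB' : suppMap p D r₁ U₁ (-(j : ZMod r₁) - 1) = suppMap p D r U (κ - 1) := by
        rw [hB, hφκ1]
        rcases Nat.lt_or_ge (j + 1) r₁ with h2 | h2
        · rw [Nat.mod_eq_of_lt h2]
          exact hcmod _ _ (by rw [show a' + (j + 1) = a' + j + 1 by omega]; exact haj1)
        · have h3 : j + 1 = r₁ := by omega
          rw [h3, Nat.mod_self, Nat.add_zero]
          have h5 : e (i + 1) = e (a' + j + 1) := hcmod _ _ haj1.symm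
          rw [h5, show a' + j + 1 = a' + r₁ by omega, hwrap₁]
      rw [← hA', ← hB']
      exact hV
    · haveI : NeZero r₂ := ⟨by omega⟩
      set j₂ := j - r₁ with hj₂def
      have hj₂lt : j₂ < r₂ := by omega
      have hV := IH r₂ hr₂lt hr₂1 U₂ hm₂ (-(j₂ : ZMod r₂))
      have hA : suppMap p D r₂ U₂ (-(j₂ : ZMod r₂)) = e (b' + j₂ % r₂) := by
        rw [hU₂]
        exact pwalk_suppMap hp2 hr₂1 hW₂ j₂
      have hA' : suppMap p D r₂ U₂ (-(j₂ : ZMod r₂)) = suppMap p D r U κ := by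
        rw [hA, Nat.mod_eq_of_lt hj₂lt, hφκ]
        exact hcmod _ _ (by rw [show b' + j₂ = a' + j by omega]; exact haj)
      have hB : suppMap p D r₂ U₂ (-(j₂ : ZMod r₂) - 1) = e (b' + (j₂ + 1) % r₂) := by
        have h1 : (-(j₂ : ZMod r₂) - 1 : ZMod r₂) = -(((j₂ + 1 : ℕ)) : ZMod r₂) := by
          push_cast
          ring
        rw [h1, hU₂]
        exact pwalk_suppMap hp2 hr₂1 hW₂ (j₂ + 1)
      have hB' : suppMap p D r₂ U₂ (-(j₂ : ZMod r₂) - 1) = suppMap p D r U (κ - 1) := by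
        rw [hB, hφκ1]
        rcases Nat.lt_or_ge (j₂ + 1) r₂ with h2 | h2
        · rw [Nat.mod_eq_of_lt h2]
          exact hcmod _ _ (by rw [show b' + (j₂ + 1) = a' + j + 1 by omega]; exact haj1)
        · have h3 : j₂ + 1 = r₂ := by omega
          rw [h3, Nat.mod_self, Nat.add_zero]
          have h5 : e (i + 1) = e (a' + j + 1) := hcmod _ _ haj1.symm
          have h6 : a' + j + 1 = a' + r := by omega
          rw [h5, h6, hW.2.1 a', heab]
      rw [← hA', ← hB']
      exact hV

end MainForward



section Construct

variable {p : ℕ} {D : Finset (ι → ℕ)} (hp2 : 2 ≤ p)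
include hp2

lemma minSupport_pos {e : ι → ℕ} (he : e ∈ minSupport p D) : ∀ k, 0 < e k := by
  obtain ⟨r', hr', U', hMI, κ, hκ⟩ := he
  intro k
  rw [← hκ]
  exact phiMap_pos hp2 hr' (memE_iter hp2 hr' hMI.1.1 κ.val) k

lemma construct {r : ℕ} (hr : 1 ≤ r) (φ : ZMod r → ι → ℕ)
    (hpos : ∀ k, 0 < φ 0 k)
    (hV : ∀ i : ℕ, i < r → (Vset p D (φ (-(i : ZMod r) - 1)) (φ (-(i : ZMod r)))).Nonempty) :
    ∃ U : D → ℕ, minimalSol p D r U ∧ suppMap p D r U = φ := by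
  haveI : NeZero r := ⟨by omega⟩
  have hcastmod : ∀ n : ℕ, ((n % r : ℕ) : ZMod r) = (n : ZMod r) := fun n => by
    rw [ZMod.natCast_eq_natCast_iff']
    exact Nat.mod_mod_of_dvd _ dvd_rfl
  -- select witnesses
  have hsel : ∀ i : ℕ, ∃ (ri : ℕ) (Wi : D → ℕ), 1 ≤ ri ∧ memMI p D ri Wi ∧
      suppMap p D ri Wi (-1) = φ (-((i % r : ℕ) : ZMod r) - 1) ∧
      suppMap p D ri Wi 0 = φ (-((i % r : ℕ) : ZMod r)) := by
    intro i
    obtain ⟨w, ri, hri, Wi, hMI, h1, h2, _⟩ := hV (i % r) (Nat.mod_lt _ (by omega))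
    exact ⟨ri, Wi, hri, hMI, h1, h2⟩
  choose R W hR hMI hend1 hend0 using hsel
  -- per-witness data
  have hdata : ∀ i : ℕ,
      sliceOK p D (psiMap p D (W i)) (φ (-((i % r : ℕ) : ZMod r) - 1)) (φ (-((i % r : ℕ) : ZMod r))) ∧
      ∃ (f : ℕ → ι → ℕ) (vv : ℕ → D → ℕ),
        FWalk p D (R i - 1) f vv ∧ f 0 = φ (-((i % r : ℕ) : ZMod r) - 1) ∧
        f (R i - 1) = φ (-((i % r : ℕ) : ZMod r)) ∧
        spU p D (W i) = (∑ d, psiMap p D (W i) d)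
          + ∑ t ∈ Finset.range (R i - 1), ∑ d, vv t d := by
    intro i
    obtain ⟨eW, vW, hWW, hbuildW, hv0W, hspW⟩ := decompose hp2 (hR i) (hMI i).1.1
    have heW : ∀ t : ℕ, eW t = suppMap p D (R i) (W i) (-(t : ZMod (R i))) := fun t => by
      rw [← hbuildW]
      exact (pwalk_suppMap hp2 (hR i) hWW t).symm
    have he0 : eW 0 = φ (-((i % r : ℕ) : ZMod r)) := by
      rw [heW 0, ← hend0 i]
      norm_num
    have he1 : eW 1 = φ (-((i % r : ℕ) : ZMod r) - 1) := by
      rw [heW 1, ← hend1 i]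
      norm_num
    constructor
    · have h0 := hWW.1 0
      rw [hv0W, he0, he1] at h0
      exact h0
    · refine ⟨fun t => eW (t + 1), fun t => vW (t + 1), ?_, ?_, ?_, ?_⟩
      · intro t ht
        exact hWW.1 (t + 1)
      · show eW (0 + 1) = φ (-((i % r : ℕ) : ZMod r) - 1)
        rw [Nat.zero_add]
        exact he1
      · show eW ((R i - 1) + 1) = φ (-((i % r : ℕ) : ZMod r))
        have h1 : R i - 1 + 1 = R i := by have := hR i; omega
        rw [h1]
        have h2 : eW (R i) = eW 0 := by
          have h3 := hWW.2.1 0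
          rwa [Nat.zero_add] at h3
        rw [h2, he0]
      · show spU p D (W i) = (∑ d, psiMap p D (W i) d)
            + ∑ t ∈ Finset.range (R i - 1), ∑ d, vW (t + 1) d
        have h3 : R i = (R i - 1) + 1 := by have := hR i; omega
        rw [h3] at hspW
        rw [hspW, Finset.sum_range_succ', ← hv0W]
        omega
  have hslice := fun i => (hdata i).1
  choose F VV hF hF0 hFtop hWsplit using fun i => (hdata i).2
  -- the candidate solution
  set e : ℕ → ι → ℕ := fun t => φ (-(t : ZMod r)) with hedef
  set v : ℕ → D → ℕ := fun i => psiMap p D (W (i % r)) with hvdef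
  have hWalk : PWalk p D r e v := by
    refine ⟨?_, ?_, ?_, ?_⟩
    · intro i
      have h1 := hslice (i % r)
      have h2 : ((i % r) % r) = i % r := Nat.mod_mod_of_dvd _ dvd_rfl
      rw [h2] at h1
      show sliceOK p D (psiMap p D (W (i % r))) (φ (-((i+1 : ℕ) : ZMod r))) (φ (-(i : ZMod r)))
      have h3 : φ (-((i+1 : ℕ) : ZMod r)) = φ (-((i % r : ℕ) : ZMod r) - 1) := by
        congr 1
        rw [hcastmod i]
        push_cast
        ring
      have h4 : φ (-(i : ZMod r)) = φ (-((i % r : ℕ) : ZMod r)) := by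
        congr 1
        rw [hcastmod i]
      rw [h3, h4]
      exact h1
    · intro t
      show φ (-((t + r : ℕ) : ZMod r)) = φ (-(t : ZMod r))
      congr 2
      push_cast
      simp [ZMod.natCast_self]
    · intro i
      show psiMap p D (W ((i + r) % r)) = psiMap p D (W (i % r))
      rw [Nat.add_mod_right]
    · intro k
      show 0 < φ (-((0 : ℕ) : ZMod r)) k
      simpa using hpos k
  set U := buildU p r D v with hUdef
  have hUE : memE p D r U := pwalk_memE hp2 hr hWalk
  have hUsupp : suppMap p D r U = φ := by
    funext κ
    have h1 := pwalk_suppMap hp2 hr hWalk (-κ).val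
    have h2 : (((-κ).val : ℕ) : ZMod r) = -κ := ZMod.natCast_rightInverse _
    rw [h2, neg_neg] at h1
    rw [hUdef, h1]
    show φ (-(((-κ).val : ℕ) : ZMod r)) = φ κ
    rw [h2, neg_neg]
  -- weight computation
  set wt : ℕ → ℕ := fun i => ∑ d, psiMap p D (W i) d with hwtdef
  set ct : ℕ → ℕ := fun i => ∑ t ∈ Finset.range (R i - 1), ∑ d, VV i t d with hctdef
  have hUsp : spU p D U = ∑ i ∈ Finset.range r, wt i := by
    rw [hUdef, build_spU hp2 hr (pwalk_fwalk hp2 hr hWalk)]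
    apply Finset.sum_congr rfl
    intro i hi
    show (∑ d, psiMap p D (W (i % r)) d) = wt i
    rw [Nat.mod_eq_of_lt (Finset.mem_range.mp hi), hwtdef]
  -- the grand chained walk
  have hdeg : ∀ i : ℕ, R i - 1 = 0 → φ (-((i % r : ℕ) : ZMod r) - 1) = φ (-((i % r : ℕ) : ZMod r)) := by
    intro i h1
    rw [← hend1 i, ← hend0 i]
    have hsub : Subsingleton (ZMod (R i)) := by
      have : R i = 1 := by have := hR i; omega
      rw [this]
      infer_instance
    exact congrArg _ (Subsingleton.elim _ _)
  have hchain : ∀ N : ℕ, N ≤ r → ∃ (f : ℕ → ι → ℕ) (vv : ℕ → D → ℕ),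
      FWalk p D (∑ i ∈ Finset.range N, (R i - 1)) f vv ∧
      f 0 = φ (-(N : ZMod r)) ∧ f (∑ i ∈ Finset.range N, (R i - 1)) = φ 0 ∧
      (∑ t ∈ Finset.range (∑ i ∈ Finset.range N, (R i - 1)), ∑ d, vv t d)
        = ∑ i ∈ Finset.range N, ct i := by
    intro N
    induction N with
    | zero =>
        intro _
        refine ⟨fun _ => φ 0, fun _ _ => 0, ?_, ?_, ?_, ?_⟩
        · intro t ht
          simp at ht
        · norm_num
        · simp
        · simp
    | succ N ihN =>
        intro hN
        obtain ⟨f, vv, hG, hG0, hGtop, hGsum⟩ := ihN (by omega)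
        have hNr : N % r = N := Nat.mod_eq_of_lt (by omega)
        have hNcast : φ (-((N % r : ℕ) : ZMod r)) = φ (-(N : ZMod r)) := by
          rw [hNr]
        have hNcast1 : φ (-((N % r : ℕ) : ZMod r) - 1) = φ (-((N + 1 : ℕ) : ZMod r)) := by
          rw [hNr]
          congr 1
          push_cast
          ring
        set LA := R N - 1 with hLA
        set LG := ∑ i ∈ Finset.range N, (R i - 1) with hLG
        have hlen : ∑ i ∈ Finset.range (N + 1), (R i - 1) = LA + LG := by
          rw [Finset.sum_range_succ]
          omega
        by_cases hLA0 : LA = 0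
        · refine ⟨f, vv, ?_, ?_, ?_, ?_⟩
          · rw [hlen, hLA0, Nat.zero_add]
            exact hG
          · rw [hG0, ← hNcast, ← hdeg N hLA0, hNcast1]
          · rw [hlen, hLA0, Nat.zero_add]
            exact hGtop
          · rw [hlen, hLA0, Nat.zero_add, hGsum, Finset.sum_range_succ]
            have hct0 : ct N = 0 := by
              show (∑ t ∈ Finset.range (R N - 1), ∑ d, VV N t d) = 0
              rw [show R N - 1 = 0 from hLA0]
              simp
            omega
        · refine ⟨fun t => if t < LA then F N t else f (t - LA),
                  fun t => if t < LA then VV N t else vv (t - LA), ?_, ?_, ?_, ?_⟩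
          · rw [hlen]
            intro t ht
            show sliceOK p D (if t < LA then VV N t else vv (t - LA))
              (if t + 1 < LA then F N (t + 1) else f (t + 1 - LA))
              (if t < LA then F N t else f (t - LA))
            by_cases h1 : t < LA
            · simp only [if_pos h1]
              by_cases h2 : t + 1 < LA
              · simp only [if_pos h2]
                exact hF N t h1
              · simp only [if_neg h2]
                rw [show t + 1 - LA = 0 by omega]
                have h3 : f 0 = F N (t + 1) := by
                  rw [hG0, show t + 1 = R N - 1 by omega, hFtop N, hNr]
                rw [h3]
                exact hF N t h1
            · simp only [if_neg h1, if_neg (show ¬ t + 1 < LA by omega)]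
              rw [show t + 1 - LA = (t - LA) + 1 by omega]
              exact hG (t - LA) (by omega)
          · show (if (0 : ℕ) < LA then F N 0 else f (0 - LA)) = φ (-((N + 1 : ℕ) : ZMod r))
            rw [if_pos (by omega), hF0 N]
            exact hNcast1
          · rw [hlen]
            show (if LA + LG < LA then F N (LA + LG) else f (LA + LG - LA)) = φ 0
            rw [if_neg (by omega), show LA + LG - LA = LG by omega]
            exact hGtop
          · show (∑ t ∈ Finset.range (∑ i ∈ Finset.range (N + 1), (R i - 1)),
                  ∑ d, (if t < LA then VV N t else vv (t - LA)) d)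
                = ∑ i ∈ Finset.range (N + 1), ct i
            have hsplit2 : ∑ t ∈ Finset.range (LA + LG),
                  ∑ d, (if t < LA then VV N t else vv (t - LA)) d
                = (∑ t ∈ Finset.range LA, ∑ d, (if t < LA then VV N t else vv (t - LA)) d)
                  + ∑ t ∈ Finset.range LG,
                      ∑ d, (if LA + t < LA then VV N (LA + t) else vv (LA + t - LA)) d :=
              sum_range_add' (fun t => ∑ d, (if t < LA then VV N t else vv (t - LA)) d) LA LG
            have hA : (∑ t ∈ Finset.range LA, ∑ d, (if t < LA then VV N t else vv (t - LA)) d)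
                = ct N := by
              show _ = ∑ t ∈ Finset.range (R N - 1), ∑ d, VV N t d
              rw [← hLA]
              apply Finset.sum_congr rfl
              intro t ht
              rw [if_pos (Finset.mem_range.mp ht)]
            have hB : (∑ t ∈ Finset.range LG,
                  ∑ d, (if LA + t < LA then VV N (LA + t) else vv (LA + t - LA)) d)
                = ∑ i ∈ Finset.range N, ct i := by
              rw [← hGsum]
              apply Finset.sum_congr rfl
              intro t ht
              rw [if_neg (by omega), show LA + t - LA = t by omega]
            rw [hlen, hsplit2, hA, hB, Finset.sum_range_succ]
            omega
  -- use the grand chain to bound the weight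
  obtain ⟨f, vv, hG, hG0, hGtop, hGsum⟩ := hchain r le_rfl
  set S := ∑ i ∈ Finset.range r, (R i - 1) with hSdef
  have hG0' : f 0 = φ 0 := by
    rw [hG0]
    congr 1
    rw [ZMod.natCast_self, neg_zero]
  have hcb : ((p:ℝ) - 1) * (S:ℝ) * density p D
      ≤ ((∑ i ∈ Finset.range r, ct i : ℕ) : ℝ) := by
    rcases Nat.eq_zero_or_pos S with hS0 | hS1
    · rw [hS0]
      simp
      positivity
    · have hcl : f S = f 0 := by rw [hGtop, hG0']
      have hUA : memE p D S (buildU p S D vv) :=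
        build_memE hp2 hS1 hG hcl (by rw [hG0']; exact hpos)
      have hlb := density_lb hp2 hS1 hUA
      rw [build_spU hp2 hS1 hG, hGsum] at hlb
      exact hlb
  have hSsum : (∑ i ∈ Finset.range r, (spU p D (W i) : ℝ))
      = ((p:ℝ) - 1) * (∑ i ∈ Finset.range r, (R i : ℝ)) * density p D := by
    calc ∑ i ∈ Finset.range r, (spU p D (W i) : ℝ)
        = ∑ i ∈ Finset.range r, ((p:ℝ)-1) * (R i : ℝ) * density p D :=
          Finset.sum_congr rfl (fun i _ => (hMI i).1.2)
      _ = _ := by rw [← Finset.sum_mul, ← Finset.mul_sum]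
  have hRS : (∑ i ∈ Finset.range r, (R i : ℝ)) = (S : ℝ) + (r : ℝ) := by
    have h1 : ∑ i ∈ Finset.range r, R i = S + r := by
      have h2 : ∀ i ∈ Finset.range r, R i = (R i - 1) + 1 := fun i _ => by
        have := hR i
        omega
      rw [Finset.sum_congr rfl h2, Finset.sum_add_distrib, Finset.sum_const,
        Finset.card_range, smul_eq_mul, Nat.mul_one]
    exact_mod_cast congrArg (fun n : ℕ => (n : ℝ)) h1
  have hWsum : (∑ i ∈ Finset.range r, spU p D (W i))
      = (∑ i ∈ Finset.range r, wt i) + ∑ i ∈ Finset.range r, ct i := by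
    rw [← Finset.sum_add_distrib]
    exact Finset.sum_congr rfl (fun i _ => hWsplit i)
  have hfin : (spU p D U : ℝ) ≤ ((p:ℝ) - 1) * (r:ℝ) * density p D := by
    have hc1 : ((∑ i ∈ Finset.range r, spU p D (W i) : ℕ) : ℝ)
        = ∑ i ∈ Finset.range r, (spU p D (W i) : ℝ) := by push_cast; rfl
    have hc2 : ((∑ i ∈ Finset.range r, spU p D (W i) : ℕ) : ℝ)
        = ((∑ i ∈ Finset.range r, wt i : ℕ) : ℝ) + ((∑ i ∈ Finset.range r, ct i : ℕ) : ℝ) := by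
      rw [hWsum]
      push_cast
      ring
    have hc3 : (spU p D U : ℝ) = ((∑ i ∈ Finset.range r, wt i : ℕ) : ℝ) := by rw [hUsp]
    have hexp : ((p:ℝ) - 1) * ((S:ℝ) + (r:ℝ)) * density p D
        = ((p:ℝ) - 1) * (S:ℝ) * density p D + ((p:ℝ) - 1) * (r:ℝ) * density p D := by
      ring
    rw [hc1, hSsum, hRS, hexp] at hc2
    linarith
  exact ⟨U, minimal_of hp2 hr hUE hfin, hUsupp⟩

end Construct


/-- The set `M_{D,p}(φ)` of minimal solutions with support `φ` is empty if and
only if one of the sets `V(φ(−i−1), φ(−i))` is empty. -/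
theorem Mphi_empty_iff (p : ℕ) (hp : p.Prime) {ι : Type} [Fintype ι] [Nonempty ι]
    (D : Finset (ι → ℕ)) (hD : D.Nonempty)
    (hcoord : ∀ k : ι, ∃ d ∈ D, 0 < d k)
    (r : ℕ) (hr : 1 ≤ r) (φ : ZMod r → (ι → ℕ))
    (hφ : ∀ i, φ i ∈ minSupport p D) :
    (¬ ∃ U : D → ℕ, minimalSol p D r U ∧ suppMap p D r U = φ) ↔
    (∃ i : ℕ, i < r ∧ Vset p D (φ (-(i : ZMod r) - 1)) (φ (-(i : ZMod r))) = ∅) := by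
  have hp2 : 2 ≤ p := hp.two_le
  constructor
  · intro hne
    by_contra hc
    push_neg at hc
    apply hne
    apply construct hp2 hr φ (minSupport_pos hp2 (hφ 0))
    intro i hi
    exact hc i hi
  · rintro ⟨i, hi, hVempty⟩ ⟨U, hmin, hsupp⟩
    have hne := main_forward hp2 r hr U hmin (-(i : ZMod r))
    rw [hsupp] at hne
    rw [hVempty] at hne
    exact Set.not_nonempty_empty hne
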